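/- Let N ≥ 1 and let {iX_j}_{j=1}^N satisfy condition (H1). Then for every compact set K ⊂ ℝ^{n+1} there exists a constant C_K > 0, depending only on the L^∞(K)-norms of the coefficients a_{jk}, of the structure functions c^{jk}_l, and of their derivatives, such that for all v ∈ C_0^∞(K): Im(P_1 v, v) ≥ Σ_{j=1}^N Re( ( Σ_{k=1}^N i c^{j1}_k X_k^* X_j + (i/2) d_1 X_j^* X_j + (i/2)( c'_j - (X_1 d_j) + 2 (X_j d_1) + d_1 d_j ) X_j ) v, v ) - C_K ‖v‖_{L²}², where c'_j := Σ_{k=1}^N ( Σ_{l=1}^N c^{lk}_j + (X_k c_j^{k1}) + d_k c_j^{k1} - 2 d_k c_k^{j1} ). -/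

import Mathlib

open MeasureTheory

noncomputable section

namespace Carleman

/-- The ambient space `ℝ^{n+1}`. -/
abbrev Spc (n : ℕ) : Type := EuclideanSpace ℝ (Fin (n + 1))

/-- Real coefficients `(a₁,…,a_{n+1})` of a first order operator on `ℝ^{n+1}`. -/
abbrev Coeffs (n : ℕ) : Type := Fin (n + 1) → Spc n → ℝ

variable {n : ℕ}

/-- `k`-th partial derivative `∂ₖ u`. -/
def pd (k : Fin (n + 1)) (u : Spc n → ℂ) (x : Spc n) : ℂ :=
  fderiv ℝ u x (EuclideanSpace.single k (1 : ℝ))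

/-- The operator `X = ∑ₖ aₖ Dₖ`, with `Dₖ = -i ∂ₖ`. -/
def Xop (a : Coeffs n) (u : Spc n → ℂ) : Spc n → ℂ :=
  fun x => ∑ k, (a k x : ℂ) * (-Complex.I * pd k u x)

/-- The function `d = ∑ₖ Dₖ aₖ`. -/
def dfun (a : Coeffs n) (x : Spc n) : ℂ :=
  ∑ k, -Complex.I * (fderiv ℝ (a k) x (EuclideanSpace.single k (1 : ℝ)) : ℂ)

/-- The formal `L²` adjoint `X^* = X + d`. -/
def Xstar (a : Coeffs n) (u : Spc n → ℂ) : Spc n → ℂ :=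
  fun x => Xop a u x + dfun a x * u x

/-- All the coefficients are smooth. -/
def SmoothCoeffs (a : Coeffs n) : Prop := ∀ k, ContDiff ℝ (⊤ : ℕ∞) (a k)

/-- `∑ⱼ Xⱼ^* Xⱼ u`. -/
def sumXsX {N : ℕ} (a : Fin N → Coeffs n) (u : Spc n → ℂ) : Spc n → ℂ :=
  fun x => ∑ j, Xstar (a j) (Xop (a j) u) x

/-- `P₁ = X₁ ∑ⱼ Xⱼ^* Xⱼ + X₀`, where `X₁ = X_{j₁}`. -/
def P1 {N : ℕ} (a0 : Coeffs n) (a : Fin N → Coeffs n) (j1 : Fin N) (u : Spc n → ℂ) :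
    Spc n → ℂ :=
  fun x => Xop (a j1) (sumXsX a u) x + Xop a0 u x

/-- The formal adjoint `P₁^* = ∑ⱼ Xⱼ^* Xⱼ X₁^* + X₀^*`. -/
def P1star {N : ℕ} (a0 : Coeffs n) (a : Fin N → Coeffs n) (j1 : Fin N) (u : Spc n → ℂ) :
    Spc n → ℂ :=
  fun x => (∑ j, Xstar (a j) (Xop (a j) (Xstar (a j1) u)) x) + Xstar a0 u x

/-- A smooth function with purely imaginary values. -/
def SmoothImag (g : Spc n → ℂ) : Prop := ContDiff ℝ (⊤ : ℕ∞) g ∧ ∀ x, (g x).re = 0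

/-- `c` is a family of structure functions for the system `a`:
`[X_j, X_k] = ∑ₗ (c j k l) • Xₗ` as operators on smooth functions. -/
def IsInvolutiveWith {N : ℕ} (a : Fin N → Coeffs n)
    (c : Fin N → Fin N → Fin N → Spc n → ℂ) : Prop :=
  (∀ j k l, SmoothImag (c j k l)) ∧
    ∀ j k, ∀ u : Spc n → ℂ, ContDiff ℝ (⊤ : ℕ∞) u → ∀ x,
      Xop (a j) (Xop (a k) u) x - Xop (a k) (Xop (a j) u) x = ∑ l, c j k l x * Xop (a l) u x

/-- Condition (H1): smooth real vector fields forming a globally involutive system. -/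
def CondH1 {N : ℕ} (a : Fin N → Coeffs n) : Prop :=
  (∀ j, SmoothCoeffs (a j)) ∧ ∃ c, IsInvolutiveWith a c

/-- `C₀^∞(K)`: smooth functions supported in the compact set `K`. -/
def TestOn (K : Set (Spc n)) (u : Spc n → ℂ) : Prop :=
  ContDiff ℝ (⊤ : ℕ∞) u ∧ tsupport u ⊆ K

/-- The weighted function `e^{λ f} u`. -/
def expw (lam : ℝ) (f : Spc n → ℝ) (u : Spc n → ℂ) : Spc n → ℂ :=
  fun x => (Real.exp (lam * f x) : ℂ) * u x

/-- The `L²(ℝ^{n+1})` inner product `(u, v) = ∫ u v̄`. -/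
def ip (u v : Spc n → ℂ) : ℂ := ∫ x : Spc n, u x * (starRingEnd ℂ) (v x)

/-- The squared `L²(ℝ^{n+1})` norm. -/
def l2sq (u : Spc n → ℂ) : ℝ := ∫ x : Spc n, ‖u x‖ ^ 2

/-- The squared Sobolev `H^s(ℝ^{n+1})` norm, via the Fourier transform. -/
def hsSq (s : ℝ) (u : Spc n → ℂ) : ℝ :=
  ∫ ξ : Spc n, (1 + ‖ξ‖ ^ 2) ^ s * ‖FourierTransform.fourier u ξ‖ ^ 2

/-- The real valued function `-iX₁f` (for `f` real valued). -/
def mIXf (a1 : Coeffs n) (f : Spc n → ℝ) (x : Spc n) : ℝ :=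
  (-Complex.I * Xop a1 (fun y => (f y : ℂ)) x).re

/-- The coefficient vector of the real vector field `iX` attached to `a`. -/
def coeffVF (a : Coeffs n) : Spc n → Spc n :=
  fun x => (EuclideanSpace.equiv (Fin (n + 1)) ℝ).symm fun k => a k x

/-- Lie bracket of vector fields. -/
def vfLie (V W : Spc n → Spc n) : Spc n → Spc n :=
  fun x => fderiv ℝ W x (V x) - fderiv ℝ V x (W x)

/-- Iterated commutators of length `m` of the system of vector fields `V`. -/
inductive IsBracket {N : ℕ} (V : Fin N → Spc n → Spc n) : ℕ → (Spc n → Spc n) → Prop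
  | base (j : Fin N) : IsBracket V 1 (V j)
  | lie {p q : ℕ} {W₁ W₂ : Spc n → Spc n} :
      IsBracket V p W₁ → IsBracket V q W₂ → IsBracket V (p + q) (vfLie W₁ W₂)

/-- Hörmander's condition of rank `r`: the vector fields `iX_j` together with their
iterated commutators of length up to `r` span the whole space at every point. -/
def Hormander {N : ℕ} (a : Fin N → Coeffs n) (r : ℕ) : Prop :=
  ∀ x : Spc n,
    Submodule.span ℝ
      {w : Spc n | ∃ m, m ≤ r ∧ ∃ W, IsBracket (fun j => coeffVF (a j)) m W ∧ w = W x} = ⊤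

/-- Membership in `L²_loc(ℝ^{n+1})`. -/
def MemL2loc (g : Spc n → ℂ) : Prop :=
  AEStronglyMeasurable g volume ∧
    ∀ K : Set (Spc n), IsCompact K → IntegrableOn (fun x => ‖g x‖ ^ 2) K volume

/-- Membership in `H^s_loc(ℝ^{n+1})` (`s ≥ 0`), via the Fourier transform. -/
def MemHsLoc (s : ℝ) (g : Spc n → ℂ) : Prop :=
  AEStronglyMeasurable g volume ∧
    ∀ χ : Spc n → ℝ, ContDiff ℝ (⊤ : ℕ∞) χ → HasCompactSupport χ →
      Integrable (fun x => (χ x : ℂ) * g x) volume ∧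
        (∫⁻ ξ : Spc n,
            ENNReal.ofReal ((1 + ‖ξ‖ ^ 2) ^ s) *
              (‖FourierTransform.fourier (fun x => (χ x : ℂ) * g x) ξ‖₊ : ENNReal) ^ 2) < ⊤

/-- `u` solves `P u = g` weakly on the open set `U`, where `Padj` is the formal
adjoint of `P`: for all test functions `φ` compactly supported in `U`,
`(u, Padj φ) = (g, φ)`. -/
def WeakEqOn (Padj : (Spc n → ℂ) → Spc n → ℂ) (u g : Spc n → ℂ) (U : Set (Spc n)) : Prop :=
  ∀ φ : Spc n → ℂ, ContDiff ℝ (⊤ : ℕ∞) φ → HasCompactSupport φ → tsupport φ ⊆ U →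
    ∫ x : Spc n, u x * (starRingEnd ℂ) (Padj φ x) = ∫ x : Spc n, g x * (starRingEnd ℂ) (φ x)

/-- The operator `P` whose formal adjoint is `Padj` is locally solvable at `x₀`, with data in
the class `S` and solutions in the class `T`: there is a compact set `K` containing `x₀` in its
interior such that for every `g ∈ S` there is `u ∈ T` with `P u = g` (weakly) in the interior
of `K`. -/
def LocSolvAt (Padj : (Spc n → ℂ) → Spc n → ℂ) (S T : (Spc n → ℂ) → Prop)
    (x₀ : Spc n) : Prop :=
  ∃ K : Set (Spc n), IsCompact K ∧ x₀ ∈ interior K ∧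
    ∀ g, S g → ∃ u, T u ∧ WeakEqOn Padj u g (interior K)


/-- `c'_j = ∑ₖ ( ∑ₗ c^{lk}_j + (X_k c_j^{k1}) + d_k c_j^{k1} - 2 d_k c_k^{j1} )`,
where `c^{jk}_l` is coded as `c j k l` and `j1` is the index of `X₁`. -/
def cprime {N : ℕ} (a : Fin N → Coeffs n) (c : Fin N → Fin N → Fin N → Spc n → ℂ)
    (j1 j : Fin N) (x : Spc n) : ℂ :=
  ∑ k, ((∑ l, c l k j x) + Xop (a k) (c k j1 j) x + dfun (a k) x * c k j1 j x -
    2 * dfun (a k) x * c j j1 k x)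

/-- `c''_j = ∑ₖ ( (X_k c_k^{j1}) + (X_k^* c_k^{j1}) + (X_k c_j^{k1}) + (X_k^* c_j^{k1}) )`. -/
def cdprime {N : ℕ} (a : Fin N → Coeffs n) (c : Fin N → Fin N → Fin N → Spc n → ℂ)
    (j1 j : Fin N) (x : Spc n) : ℂ :=
  ∑ k, (Xop (a k) (c j j1 k) x + Xstar (a k) (c j j1 k) x +
    Xop (a k) (c k j1 j) x + Xstar (a k) (c k j1 j) x)

/-- The second order operator
`Q_j = (λ(-iX₁f) + i d₁/2) X_j^* X_j + ∑ₖ i c^{j1}_k X_k^* X_j - iλ (X_jX₁f) X_j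
      + (i/2)(c'_j - (X₁d_j) + 2(X_jd₁) + d₁d_j) X_j`. -/
def Qop {N : ℕ} (a : Fin N → Coeffs n) (c : Fin N → Fin N → Fin N → Spc n → ℂ)
    (j1 : Fin N) (f : Spc n → ℝ) (lam : ℝ) (j : Fin N) (v : Spc n → ℂ) (x : Spc n) : ℂ :=
  ((lam : ℂ) * (-Complex.I * Xop (a j1) (fun y => (f y : ℂ)) x) +
        Complex.I * dfun (a j1) x / 2) * Xstar (a j) (Xop (a j) v) x +
    (∑ k, Complex.I * c j j1 k x * Xstar (a k) (Xop (a j) v) x) -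
    Complex.I * (lam : ℂ) * Xop (a j) (Xop (a j1) (fun y => (f y : ℂ))) x * Xop (a j) v x +
    Complex.I / 2 *
      (cprime a c j1 j x - Xop (a j1) (dfun (a j)) x + 2 * Xop (a j) (dfun (a j1)) x +
        dfun (a j1) x * dfun (a j) x) * Xop (a j) v x

/-- The second order operator
`Q'_j = (λ(-iX₁f) + i d₁/2) X_j^* X_j - ∑ₖ i c^{j1}_k X_j^* X_k - iλ (X_jX₁f) X_j
      + (i/2)(c'_j - c''_j - (X₁d_j) + 2(X_jd₁) + d₁d_j) X_j`. -/
def Qop' {N : ℕ} (a : Fin N → Coeffs n) (c : Fin N → Fin N → Fin N → Spc n → ℂ)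
    (j1 : Fin N) (f : Spc n → ℝ) (lam : ℝ) (j : Fin N) (v : Spc n → ℂ) (x : Spc n) : ℂ :=
  ((lam : ℂ) * (-Complex.I * Xop (a j1) (fun y => (f y : ℂ)) x) +
        Complex.I * dfun (a j1) x / 2) * Xstar (a j) (Xop (a j) v) x -
    (∑ k, Complex.I * c j j1 k x * Xstar (a j) (Xop (a k) v) x) -
    Complex.I * (lam : ℂ) * Xop (a j) (Xop (a j1) (fun y => (f y : ℂ))) x * Xop (a j) v x +
    Complex.I / 2 *
      (cprime a c j1 j x - cdprime a c j1 j x - Xop (a j1) (dfun (a j)) x +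
        2 * Xop (a j) (dfun (a j1)) x + dfun (a j1) x * dfun (a j) x) * Xop (a j) v x

/-- The coefficient of the first order operator
`L₁ = ∑ⱼ [ λ dⱼ(Xⱼf) + λ(Xⱼ²f) - λ²(Xⱼf)² ] X₁`. -/
def L1coef {N : ℕ} (a : Fin N → Coeffs n) (f : Spc n → ℝ) (lam : ℝ) (x : Spc n) : ℂ :=
  ∑ j, ((lam : ℂ) * dfun (a j) x * Xop (a j) (fun y => (f y : ℂ)) x +
    (lam : ℂ) * Xop (a j) (Xop (a j) (fun y => (f y : ℂ))) x -
    (lam : ℂ) ^ 2 * Xop (a j) (fun y => (f y : ℂ)) x ^ 2)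

/-- The multiplication operator
`L₀ = ∑ⱼ [ λ(X₁dⱼ)(Xⱼf) + λ dⱼ(X₁Xⱼf) + λ(X₁Xⱼ²f) - 2λ²(Xⱼf)(X₁Xⱼf)
      + (X₁f)(λ² dⱼ(Xⱼf) + λ²(Xⱼ²f) + λ³(iXⱼf)²) ] + λ(X₀f)`. -/
def L0coef {N : ℕ} (a0 : Coeffs n) (a : Fin N → Coeffs n) (j1 : Fin N) (f : Spc n → ℝ)
    (lam : ℝ) (x : Spc n) : ℂ :=
  (∑ j, ((lam : ℂ) * Xop (a j1) (dfun (a j)) x * Xop (a j) (fun y => (f y : ℂ)) x +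
      (lam : ℂ) * dfun (a j) x * Xop (a j1) (Xop (a j) (fun y => (f y : ℂ))) x +
      (lam : ℂ) * Xop (a j1) (Xop (a j) (Xop (a j) (fun y => (f y : ℂ)))) x -
      2 * (lam : ℂ) ^ 2 * Xop (a j) (fun y => (f y : ℂ)) x *
        Xop (a j1) (Xop (a j) (fun y => (f y : ℂ))) x +
      Xop (a j1) (fun y => (f y : ℂ)) x *
        ((lam : ℂ) ^ 2 * dfun (a j) x * Xop (a j) (fun y => (f y : ℂ)) x +
          (lam : ℂ) ^ 2 * Xop (a j) (Xop (a j) (fun y => (f y : ℂ))) x +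
          (lam : ℂ) ^ 3 * (Complex.I * Xop (a j) (fun y => (f y : ℂ)) x) ^ 2))) +
    (lam : ℂ) * Xop a0 (fun y => (f y : ℂ)) x

open Complex Function

section Aux

variable {n : ℕ}

-- ### smoothness
lemma contDiff_fderiv_apply {E F : Type*} [NormedAddCommGroup E] [NormedSpace ℝ E]
    [NormedAddCommGroup F] [NormedSpace ℝ F] {u : E → F} (hu : ContDiff ℝ (⊤ : ℕ∞) u) (ξ : E) :
    ContDiff ℝ (⊤ : ℕ∞) (fun x => fderiv ℝ u x ξ) := by
  have h1 : ContDiff ℝ (⊤ : ℕ∞) (fderiv ℝ u) := hu.fderiv_right (le_of_eq rfl)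
  exact (ContinuousLinearMap.apply ℝ F ξ).contDiff.comp h1

lemma pd_contDiff {u : Spc n → ℂ} (k : Fin (n + 1)) (hu : ContDiff ℝ (⊤ : ℕ∞) u) :
    ContDiff ℝ (⊤ : ℕ∞) (pd k u) :=
  contDiff_fderiv_apply hu _

lemma ofReal_contDiff {b : Spc n → ℝ} (hb : ContDiff ℝ (⊤ : ℕ∞) b) :
    ContDiff ℝ (⊤ : ℕ∞) (fun x => (b x : ℂ)) :=
  Complex.ofRealCLM.contDiff.comp hb

lemma Xop_contDiff {a : Coeffs n} {u : Spc n → ℂ} (ha : SmoothCoeffs a)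
    (hu : ContDiff ℝ (⊤ : ℕ∞) u) : ContDiff ℝ (⊤ : ℕ∞) (Xop a u) := by
  unfold Xop
  exact ContDiff.sum (fun k _ => (ofReal_contDiff (ha k)).mul
    (contDiff_const.mul (pd_contDiff k hu)))

lemma dfun_contDiff {a : Coeffs n} (ha : SmoothCoeffs a) :
    ContDiff ℝ (⊤ : ℕ∞) (dfun a) := by
  unfold dfun
  exact ContDiff.sum (fun k _ => contDiff_const.mul (ofReal_contDiff
    (contDiff_fderiv_apply (ha k) _)))

lemma Xstar_contDiff {a : Coeffs n} {u : Spc n → ℂ} (ha : SmoothCoeffs a)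
    (hu : ContDiff ℝ (⊤ : ℕ∞) u) : ContDiff ℝ (⊤ : ℕ∞) (Xstar a u) :=
  (Xop_contDiff ha hu).add ((dfun_contDiff ha).mul hu)

lemma conj_contDiff {w : Spc n → ℂ} (hw : ContDiff ℝ (⊤ : ℕ∞) w) :
    ContDiff ℝ (⊤ : ℕ∞) (fun x => (starRingEnd ℂ) (w x)) :=
  Complex.conjCLE.contDiff.comp hw

lemma cd_diff {u : Spc n → ℂ} (hu : ContDiff ℝ (⊤ : ℕ∞) u) : Differentiable ℝ u :=
  hu.differentiable (by simp)

-- ### supports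
lemma hcs_pd {u : Spc n → ℂ} (k : Fin (n + 1)) (h : HasCompactSupport u) :
    HasCompactSupport (pd k u) := by
  apply HasCompactSupport.intro h
  intro x hx
  have : fderiv ℝ u x = 0 := by
    by_contra hne
    exact hx (support_fderiv_subset ℝ hne)
  simp [pd, this]

lemma hcs_conj {u : Spc n → ℂ} (h : HasCompactSupport u) :
    HasCompactSupport (fun x => (starRingEnd ℂ) (u x)) :=
  h.comp_left (g := (starRingEnd ℂ)) (by simp)

lemma hcs_Xop {a : Coeffs n} {u : Spc n → ℂ} (h : HasCompactSupport u) :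
    HasCompactSupport (Xop a u) := by
  apply HasCompactSupport.intro h
  intro x hx
  have : ∀ k, pd k u x = 0 := by
    intro k
    have : fderiv ℝ u x = 0 := by
      by_contra hne
      exact hx (support_fderiv_subset ℝ hne)
    simp [pd, this]
  simp [Xop, this]

lemma hcs_mulfn {g u : Spc n → ℂ} (h : HasCompactSupport u) :
    HasCompactSupport (fun x => g x * u x) :=
  h.mul_left (f := g)

lemma hcs_Xstar {a : Coeffs n} {u : Spc n → ℂ} (h : HasCompactSupport u) :
    HasCompactSupport (Xstar a u) := by
  have h1 : HasCompactSupport (Xop a u) := hcs_Xop h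
  have h2 : HasCompactSupport (fun x => dfun a x * u x) := hcs_mulfn h
  exact h1.add h2

lemma hcs_sum {N : ℕ} {f : Fin N → Spc n → ℂ} (h : ∀ j, HasCompactSupport (f j)) :
    HasCompactSupport (fun x => ∑ j, f j x) := by
  induction N with
  | zero => simp [HasCompactSupport, tsupport]
  | succ m ih =>
      have : (fun x => ∑ j : Fin (m+1), f j x)
          = fun x => (∑ j : Fin m, f j.succ x) + f 0 x := by
        funext x
        rw [Fin.sum_univ_succ]
        ring
      rw [this]
      exact (ih (fun j => h j.succ)).add (h 0)

lemma TestOn.hcs {K : Set (Spc n)} {v : Spc n → ℂ} (hK : IsCompact K) (hv : TestOn K v) :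
    HasCompactSupport v :=
  IsCompact.of_isClosed_subset hK (isClosed_tsupport v) hv.2

end Aux
section Aux2

variable {n : ℕ}

-- ### pointwise calculus
lemma pd_mul {u w : Spc n → ℂ} {x : Spc n} (k : Fin (n + 1))
    (hu : DifferentiableAt ℝ u x) (hw : DifferentiableAt ℝ w x) :
    pd k (fun y => u y * w y) x = pd k u x * w x + u x * pd k w x := by
  unfold pd
  rw [fderiv_fun_mul hu hw]
  simp [smul_eq_mul]
  ring

lemma pd_conj {u : Spc n → ℂ} {x : Spc n} (k : Fin (n + 1)) :
    pd k (fun y => (starRingEnd ℂ) (u y)) x = (starRingEnd ℂ) (pd k u x) := by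
  unfold pd
  have : (fun y => (starRingEnd ℂ) (u y)) = (⇑(Complex.conjCLE) ∘ u) := rfl
  rw [this, ContinuousLinearEquiv.comp_fderiv]
  simp

lemma pd_ofReal {b : Spc n → ℝ} {x : Spc n} (k : Fin (n + 1)) (hb : DifferentiableAt ℝ b x) :
    pd k (fun y => (b y : ℂ)) x = (fderiv ℝ b x (EuclideanSpace.single k (1 : ℝ)) : ℂ) := by
  unfold pd
  have : (fun y => (b y : ℂ)) = (⇑(Complex.ofRealCLM) ∘ b) := rfl
  rw [this, fderiv_comp x Complex.ofRealCLM.differentiableAt hb]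
  simp

lemma pd_const_mul {u : Spc n → ℂ} {x : Spc n} (k : Fin (n + 1)) (z : ℂ)
    (hu : DifferentiableAt ℝ u x) :
    pd k (fun y => z * u y) x = z * pd k u x := by
  unfold pd
  rw [fderiv_const_mul hu z]
  simp

lemma Xop_mul {a : Coeffs n} {u w : Spc n → ℂ} {x : Spc n}
    (hu : DifferentiableAt ℝ u x) (hw : DifferentiableAt ℝ w x) :
    Xop a (fun y => u y * w y) x = Xop a u x * w x + u x * Xop a w x := by
  unfold Xop
  rw [Finset.sum_mul, Finset.mul_sum, ← Finset.sum_add_distrib]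
  refine Finset.sum_congr rfl fun k _ => ?_
  rw [pd_mul k hu hw]
  ring

lemma Xop_const_mul {a : Coeffs n} {u : Spc n → ℂ} {x : Spc n} (z : ℂ)
    (hu : DifferentiableAt ℝ u x) :
    Xop a (fun y => z * u y) x = z * Xop a u x := by
  unfold Xop
  rw [Finset.mul_sum]
  refine Finset.sum_congr rfl fun k _ => ?_
  rw [pd_const_mul k z hu]
  ring

lemma conj_Xop {a : Coeffs n} {u : Spc n → ℂ} {x : Spc n} :
    (starRingEnd ℂ) (Xop a u x) = -Xop a (fun y => (starRingEnd ℂ) (u y)) x := by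
  unfold Xop
  rw [← Finset.sum_neg_distrib, map_sum]
  refine Finset.sum_congr rfl fun k _ => ?_
  rw [pd_conj k]
  simp only [map_mul, map_neg, Complex.conj_I, Complex.conj_ofReal]
  ring

lemma conj_dfun {a : Coeffs n} (x : Spc n) : (starRingEnd ℂ) (dfun a x) = -dfun a x := by
  unfold dfun
  rw [← Finset.sum_neg_distrib, map_sum]
  refine Finset.sum_congr rfl fun k _ => ?_
  simp only [map_mul, map_neg, Complex.conj_I, Complex.conj_ofReal]
  ring

lemma re_dfun {a : Coeffs n} (x : Spc n) : (dfun a x).re = 0 := by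
  have h2 := congrArg Complex.re (conj_dfun (a := a) x)
  simp only [Complex.conj_re, Complex.neg_re] at h2
  linarith

lemma re_pd_of_imag {g : Spc n → ℂ} (hg : ∀ y, (g y).re = 0) {x : Spc n}
    (hd : DifferentiableAt ℝ g x) (k : Fin (n + 1)) : (pd k g x).re = 0 := by
  have h0 : (fun y => Complex.reCLM (g y)) = fun _ => (0 : ℝ) := funext fun y => by simp [hg y]
  have h1 : fderiv ℝ (fun y => Complex.reCLM (g y)) x =
      (Complex.reCLM : ℂ →L[ℝ] ℝ).comp (fderiv ℝ g x) := by
    rw [show (fun y => Complex.reCLM (g y)) = (⇑Complex.reCLM ∘ g) from rfl,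
      fderiv_comp x Complex.reCLM.differentiableAt hd]
    simp
  rw [h0] at h1
  have := congrArg (fun (L : Spc n →L[ℝ] ℝ) => L (EuclideanSpace.single k (1 : ℝ))) h1
  simpa [pd] using this.symm

lemma im_Xop_of_imag {a : Coeffs n} {g : Spc n → ℂ} (hg : ∀ y, (g y).re = 0)
    (hd : Differentiable ℝ g) (x : Spc n) : (Xop a g x).im = 0 := by
  unfold Xop
  rw [Complex.im_sum]
  refine Finset.sum_eq_zero fun k _ => ?_
  have := re_pd_of_imag hg (hd x) k
  simp [Complex.mul_im, this]

lemma conj_eq_neg_of_re_zero {z : ℂ} (h : z.re = 0) : (starRingEnd ℂ) z = -z :=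
  Complex.ext (by simp [h]) (by simp)

lemma conj_eq_self_of_im_zero {z : ℂ} (h : z.im = 0) : (starRingEnd ℂ) z = z :=
  Complex.ext (by simp) (by simp [h])

-- ### ip algebra
lemma integK {u w : Spc n → ℂ} (hu : Continuous u) (hw : Continuous w)
    (h : HasCompactSupport u ∨ HasCompactSupport w) :
    Integrable (fun x : Spc n => u x * (starRingEnd ℂ) (w x)) := by
  have hcc : Continuous fun x => u x * (starRingEnd ℂ) (w x) :=
    hu.mul (continuous_star.comp hw)
  have hcs : HasCompactSupport fun x => u x * (starRingEnd ℂ) (w x) := by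
    rcases h with h | h
    · exact (h.mul_right (f' := fun x => (starRingEnd ℂ) (w x)))
    · exact (hcs_conj h).mul_left (f := u)
  exact hcc.integrable_of_hasCompactSupport hcs

lemma ip_congr {u u' w : Spc n → ℂ} (h : ∀ x, u x = u' x) : ip u w = ip u' w := by
  unfold ip; exact integral_congr_ae (Filter.Eventually.of_forall fun x => by simp only [h x])

lemma ip_congr_right {u w w' : Spc n → ℂ} (h : ∀ x, w x = w' x) : ip u w = ip u w' := by
  unfold ip; exact integral_congr_ae (Filter.Eventually.of_forall fun x => by simp only [h x])

lemma ip_const_mul (z : ℂ) (u w : Spc n → ℂ) :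
    ip (fun x => z * u x) w = z * ip u w := by
  unfold ip
  simp only [mul_assoc]
  exact integral_const_mul z _

lemma ip_add_left {u v w : Spc n → ℂ}
    (h1 : Integrable (fun x : Spc n => u x * (starRingEnd ℂ) (w x)))
    (h2 : Integrable (fun x : Spc n => v x * (starRingEnd ℂ) (w x))) :
    ip (fun x => u x + v x) w = ip u w + ip v w := by
  unfold ip
  simp only [add_mul]
  exact integral_add h1 h2

lemma ip_sum_left {N : ℕ} {u : Fin N → Spc n → ℂ} {w : Spc n → ℂ}
    (h : ∀ j, Integrable (fun x : Spc n => u j x * (starRingEnd ℂ) (w x))) :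
    ip (fun x => ∑ j, u j x) w = ∑ j, ip (u j) w := by
  unfold ip
  simp only [Finset.sum_mul]
  exact integral_finset_sum _ (fun j _ => h j)

lemma conj_ip (u w : Spc n → ℂ) : (starRingEnd ℂ) (ip u w) = ip w u := by
  unfold ip
  rw [← integral_conj]
  exact integral_congr_ae (Filter.Eventually.of_forall fun x => by
    simp [map_mul, mul_comm])

lemma ip_add_right {u w1 w2 : Spc n → ℂ}
    (h1 : Integrable (fun x : Spc n => u x * (starRingEnd ℂ) (w1 x)))
    (h2 : Integrable (fun x : Spc n => u x * (starRingEnd ℂ) (w2 x))) :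
    ip u (fun x => w1 x + w2 x) = ip u w1 + ip u w2 := by
  unfold ip
  simp only [map_add, mul_add]
  exact integral_add h1 h2

lemma ip_sum_right {N : ℕ} {u : Spc n → ℂ} {w : Fin N → Spc n → ℂ}
    (h : ∀ j, Integrable (fun x : Spc n => u x * (starRingEnd ℂ) (w j x))) :
    ip u (fun x => ∑ j, w j x) = ∑ j, ip u (w j) := by
  unfold ip
  simp only [map_sum, Finset.mul_sum]
  exact integral_finset_sum _ (fun j _ => h j)

lemma ip_neg_left {u w : Spc n → ℂ} : ip (fun x => -u x) w = -ip u w := by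
  unfold ip
  rw [← integral_neg]
  exact integral_congr_ae (Filter.Eventually.of_forall fun x => by dsimp only; ring)

/-- move a function factor from the right slot to the left slot -/
lemma ip_swap_mul {g u v0 : Spc n → ℂ} :
    ip u (fun x => g x * v0 x) = ip (fun x => (starRingEnd ℂ) (g x) * u x) v0 := by
  unfold ip
  exact integral_congr_ae (Filter.Eventually.of_forall fun x => by
    simp only [map_mul]
    ring)

/-- factor out a constant from the right slot using a pointwise conjugation identity -/
lemma ip_right_conj_fac {u w w' : Spc n → ℂ} {z : ℂ}
    (h : ∀ x, (starRingEnd ℂ) (w x) = z * (starRingEnd ℂ) (w' x)) :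
    ip u w = z * ip u w' := by
  unfold ip
  rw [← integral_const_mul]
  exact integral_congr_ae (Filter.Eventually.of_forall fun x => by
    simp only [h x]; ring)

end Aux2
section Aux3

variable {n : ℕ}

lemma ibp_pd {f g : Spc n → ℂ} (k : Fin (n + 1)) (hf : ContDiff ℝ (⊤ : ℕ∞) f)
    (hg : ContDiff ℝ (⊤ : ℕ∞) g) (hs : HasCompactSupport f ∨ HasCompactSupport g) :
    ∫ x : Spc n, f x * pd k g x = -∫ x : Spc n, pd k f x * g x := by
  have hfd : Differentiable ℝ f := cd_diff hf
  have hgd : Differentiable ℝ g := cd_diff hg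
  have hpf : Continuous (pd k f) := (pd_contDiff k hf).continuous
  have hpg : Continuous (pd k g) := (pd_contDiff k hg).continuous
  have i1 : Integrable (fun x : Spc n => f x * pd k g x) := by
    apply Continuous.integrable_of_hasCompactSupport (hf.continuous.mul hpg)
    rcases hs with h | h
    · exact h.mul_right
    · exact (hcs_pd k h).mul_left
  have i2 : Integrable (fun x : Spc n => pd k f x * g x) := by
    apply Continuous.integrable_of_hasCompactSupport (hpf.mul hgd.continuous)
    rcases hs with h | h
    · exact (hcs_pd k h).mul_right
    · exact h.mul_left
  have i3 : Integrable (fun x : Spc n => f x * g x) := by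
    apply Continuous.integrable_of_hasCompactSupport (hf.continuous.mul hgd.continuous)
    rcases hs with h | h
    · exact h.mul_right
    · exact h.mul_left
  exact integral_mul_fderiv_eq_neg_fderiv_mul_of_integrable i2 i1 i3 (fun x _ => hfd x) (fun x _ => hgd x)

/-- adjoint relation: `(Xu, w) = (u, X^* w)`. -/
lemma ip_Xop_left {a : Coeffs n} {u w : Spc n → ℂ} (ha : SmoothCoeffs a)
    (hu : ContDiff ℝ (⊤ : ℕ∞) u) (hw : ContDiff ℝ (⊤ : ℕ∞) w)
    (hs : HasCompactSupport u ∨ HasCompactSupport w) :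
    ip (Xop a u) w = ip u (Xstar a w) := by
  have hud : Differentiable ℝ u := cd_diff hu
  have hwd : Differentiable ℝ w := cd_diff hw
  have hcw : Continuous fun x => (starRingEnd ℂ) (w x) := (conj_contDiff hw).continuous
  have hfk : ∀ k : Fin (n+1), ContDiff ℝ (⊤ : ℕ∞)
      (fun x => (a k x : ℂ) * (starRingEnd ℂ) (w x)) :=
    fun k => (ofReal_contDiff (ha k)).mul (conj_contDiff hw)
  have hsk : ∀ k : Fin (n+1),
      HasCompactSupport (fun x => (a k x : ℂ) * (starRingEnd ℂ) (w x)) ∨ HasCompactSupport u := by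
    intro k
    rcases hs with h | h
    · exact Or.inr h
    · exact Or.inl ((hcs_conj h).mul_left)
  have key : ∀ k : Fin (n+1),
      (∫ x : Spc n, ((a k x : ℂ) * (-Complex.I * pd k u x)) * (starRingEnd ℂ) (w x))
      = ∫ x : Spc n, Complex.I * ((((fderiv ℝ (a k) x (EuclideanSpace.single k (1:ℝ)) : ℝ) : ℂ)
          * (starRingEnd ℂ) (w x) + (a k x : ℂ) * (starRingEnd ℂ) (pd k w x)) * u x) := by
    intro k
    have e1 : (∫ x : Spc n, ((a k x : ℂ) * (-Complex.I * pd k u x)) * (starRingEnd ℂ) (w x))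
        = -Complex.I * ∫ x : Spc n, ((a k x : ℂ) * (starRingEnd ℂ) (w x)) * pd k u x := by
      rw [← integral_const_mul]
      exact integral_congr_ae (Filter.Eventually.of_forall fun x => by ring)
    rw [e1, ibp_pd k (hfk k) hu (hsk k)]
    rw [← integral_neg, ← integral_const_mul]
    refine integral_congr_ae (Filter.Eventually.of_forall fun x => ?_)
    dsimp only
    have e2 : pd k (fun y => (a k y : ℂ) * (starRingEnd ℂ) (w y)) x
        = ((fderiv ℝ (a k) x (EuclideanSpace.single k (1:ℝ)) : ℝ) : ℂ) * (starRingEnd ℂ) (w x)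
          + (a k x : ℂ) * (starRingEnd ℂ) (pd k w x) := by
      rw [pd_mul k (cd_diff (ofReal_contDiff (ha k)) x) (cd_diff (conj_contDiff hw) x),
        pd_ofReal k (((ha k).differentiable (by simp)) x),
        pd_conj k]
    rw [e2]
    ring
  have hipdu : ∀ k : Fin (n+1), Continuous (pd k u) := fun k => (pd_contDiff k hu).continuous
  have hint : ∀ k : Fin (n+1), Integrable (fun x : Spc n =>
      ((a k x : ℂ) * (-Complex.I * pd k u x)) * (starRingEnd ℂ) (w x)) := by
    intro k
    have hcc : Continuous fun x : Spc n =>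
        ((a k x : ℂ) * (-Complex.I * pd k u x)) * (starRingEnd ℂ) (w x) :=
      (((ofReal_contDiff (ha k)).continuous).mul (continuous_const.mul (hipdu k))).mul hcw
    apply hcc.integrable_of_hasCompactSupport
    rcases hs with h | h
    · exact ((hcs_pd k h).mul_left (f := fun x => -Complex.I)).mul_left.mul_right
    · exact (hcs_conj h).mul_left
  have lhs : ip (Xop a u) w = ∑ k : Fin (n+1), ∫ x : Spc n,
      ((a k x : ℂ) * (-Complex.I * pd k u x)) * (starRingEnd ℂ) (w x) := by
    unfold ip Xop
    rw [← integral_finset_sum _ (fun k _ => hint k)]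
    refine integral_congr_ae (Filter.Eventually.of_forall fun x => ?_)
    dsimp only
    rw [Finset.sum_mul]
  have hintR : ∀ k : Fin (n+1), Integrable (fun x : Spc n =>
      Complex.I * ((((fderiv ℝ (a k) x (EuclideanSpace.single k (1:ℝ)) : ℝ) : ℂ)
        * (starRingEnd ℂ) (w x) + (a k x : ℂ) * (starRingEnd ℂ) (pd k w x)) * u x)) := by
    intro k
    have h2 : ContDiff ℝ (⊤ : ℕ∞) (fderiv ℝ (a k)) := (ha k).fderiv_right (le_of_eq rfl)
    have h3 : Continuous fun x : Spc n =>
        fderiv ℝ (a k) x (EuclideanSpace.single k (1:ℝ)) :=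
      (ContinuousLinearMap.apply ℝ ℝ (EuclideanSpace.single k (1:ℝ))).continuous.comp
        h2.continuous
    have h1 : Continuous fun x : Spc n =>
        ((fderiv ℝ (a k) x (EuclideanSpace.single k (1:ℝ)) : ℝ) : ℂ) :=
      Complex.continuous_ofReal.comp h3
    have hcpdw : Continuous fun x => (starRingEnd ℂ) (pd k w x) :=
      continuous_star.comp (pd_contDiff k hw).continuous
    have hcc : Continuous fun x : Spc n => Complex.I *
        ((((fderiv ℝ (a k) x (EuclideanSpace.single k (1:ℝ)) : ℝ) : ℂ)
        * (starRingEnd ℂ) (w x) + (a k x : ℂ) * (starRingEnd ℂ) (pd k w x)) * u x) :=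
      continuous_const.mul (((h1.mul hcw).add
        (((ofReal_contDiff (ha k)).continuous).mul hcpdw)).mul hu.continuous)
    apply hcc.integrable_of_hasCompactSupport
    rcases hs with h | h
    · exact (h.mul_left.mul_left)
    · have hsum : HasCompactSupport (fun x : Spc n =>
        (((fderiv ℝ (a k) x (EuclideanSpace.single k (1:ℝ)) : ℝ) : ℂ)
          * (starRingEnd ℂ) (w x) + (a k x : ℂ) * (starRingEnd ℂ) (pd k w x))) := by
        have hw1 : HasCompactSupport fun x => (starRingEnd ℂ) (w x) := hcs_conj h
        have hw2 : HasCompactSupport fun x => (starRingEnd ℂ) (pd k w x) :=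
          hcs_conj (hcs_pd k h)
        exact (hw1.mul_left).add (hw2.mul_left)
      exact (hsum.mul_right).mul_left
  have rhs : ip u (Xstar a w) = ∑ k : Fin (n+1), ∫ x : Spc n,
      Complex.I * ((((fderiv ℝ (a k) x (EuclideanSpace.single k (1:ℝ)) : ℝ) : ℂ)
        * (starRingEnd ℂ) (w x) + (a k x : ℂ) * (starRingEnd ℂ) (pd k w x)) * u x) := by
    unfold ip Xstar Xop dfun
    rw [← integral_finset_sum _ (fun k _ => hintR k)]
    refine integral_congr_ae (Filter.Eventually.of_forall fun x => ?_)
    dsimp only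
    rw [map_add, map_mul, map_sum, map_sum]
    simp only [map_mul, map_neg, Complex.conj_I, Complex.conj_ofReal]
    rw [mul_add, Finset.mul_sum, Finset.sum_mul, Finset.mul_sum, ← Finset.sum_add_distrib]
    exact Finset.sum_congr rfl fun k _ => by ring
  rw [lhs, rhs]
  exact Finset.sum_congr rfl fun k _ => key k

/-- adjoint relation: `(X^* u, w) = (u, X w)`. -/
lemma ip_Xstar_left {a : Coeffs n} {u w : Spc n → ℂ} (ha : SmoothCoeffs a)
    (hu : ContDiff ℝ (⊤ : ℕ∞) u) (hw : ContDiff ℝ (⊤ : ℕ∞) w)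
    (hs : HasCompactSupport u ∨ HasCompactSupport w) :
    ip (Xstar a u) w = ip u (Xop a w) := by
  have e0 : ip (Xstar a u) w = ip (Xop a u) w + ip (fun x => dfun a x * u x) w := by
    refine ip_add_left ?_ ?_
    · apply integK (Xop_contDiff ha hu).continuous hw.continuous
      rcases hs with h | h
      · exact Or.inl (hcs_Xop h)
      · exact Or.inr h
    · apply integK ((dfun_contDiff ha).continuous.mul hu.continuous) hw.continuous
      rcases hs with h | h
      · exact Or.inl (hcs_mulfn h)
      · exact Or.inr h
  have e1 : ip (fun x => dfun a x * u x) w = ip u (fun x => -(dfun a x) * w x) := by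
    unfold ip
    refine integral_congr_ae (Filter.Eventually.of_forall fun x => ?_)
    dsimp only
    rw [map_mul, map_neg, conj_dfun]
    ring
  have e2 : ip u (Xstar a w) = ip u (Xop a w) + ip u (fun x => dfun a x * w x) := by
    refine ip_add_right ?_ ?_
    · apply integK hu.continuous (Xop_contDiff ha hw).continuous
      rcases hs with h | h
      · exact Or.inl h
      · exact Or.inr (hcs_Xop h)
    · apply integK hu.continuous ((dfun_contDiff ha).continuous.mul hw.continuous)
      rcases hs with h | h
      · exact Or.inl h
      · exact Or.inr (hcs_mulfn h)
  have e3 : ip u (fun x => -(dfun a x) * w x) = -ip u (fun x => dfun a x * w x) := by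
    unfold ip
    rw [← integral_neg]
    refine integral_congr_ae (Filter.Eventually.of_forall fun x => ?_)
    dsimp only
    simp only [map_mul, map_neg]
    ring
  rw [e0, e1, e3, ip_Xop_left ha hu hw hs] at *
  rw [e2]
  ring

end Aux3
section Aux4

variable {n : ℕ}

/-- mini integration by parts: `∫ g (Xq) = -∫ (Xg + d g) q`. -/
lemma ibp_Xop {a : Coeffs n} {g q : Spc n → ℂ} (ha : SmoothCoeffs a)
    (hg : ContDiff ℝ (⊤ : ℕ∞) g) (hq : ContDiff ℝ (⊤ : ℕ∞) q) (hcs : HasCompactSupport q) :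
    ∫ x : Spc n, g x * Xop a q x = -∫ x : Spc n, (Xop a g x + dfun a x * g x) * q x := by
  have hpdq : ∀ k, Continuous (pd k q) := fun k => (pd_contDiff k hq).continuous
  have hint1 : ∀ k : Fin (n+1), Integrable (fun x : Spc n =>
      -Complex.I * ((g x * (a k x : ℂ)) * pd k q x)) := by
    intro k
    have hcc : Continuous fun x : Spc n => -Complex.I * ((g x * (a k x : ℂ)) * pd k q x) :=
      continuous_const.mul ((hg.continuous.mul (ofReal_contDiff (ha k)).continuous).mul (hpdq k))
    exact hcc.integrable_of_hasCompactSupport (((hcs_pd k hcs).mul_left).mul_left)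
  have e1 : ∫ x : Spc n, g x * Xop a q x
      = ∑ k : Fin (n+1), -Complex.I * ∫ x : Spc n, (g x * (a k x : ℂ)) * pd k q x := by
    have e1a : ∫ x : Spc n, g x * Xop a q x
        = ∑ k : Fin (n+1), ∫ x : Spc n, -Complex.I * ((g x * (a k x : ℂ)) * pd k q x) := by
      rw [← integral_finset_sum _ (fun k _ => hint1 k)]
      refine integral_congr_ae (Filter.Eventually.of_forall fun x => ?_)
      dsimp only
      unfold Xop
      rw [Finset.mul_sum]
      exact Finset.sum_congr rfl fun k _ => by ring
    rw [e1a]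
    exact Finset.sum_congr rfl fun k _ => integral_const_mul _ _
  have e2 : ∀ k : Fin (n+1), (∫ x : Spc n, (g x * (a k x : ℂ)) * pd k q x)
      = -∫ x : Spc n, (pd k g x * (a k x : ℂ)
          + g x * ((fderiv ℝ (a k) x (EuclideanSpace.single k (1:ℝ)) : ℝ) : ℂ)) * q x := by
    intro k
    have hf : ContDiff ℝ (⊤ : ℕ∞) (fun x => g x * (a k x : ℂ)) :=
      hg.mul (ofReal_contDiff (ha k))
    rw [ibp_pd k hf hq (Or.inr hcs)]
    rw [← integral_neg, ← integral_neg]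
    refine integral_congr_ae (Filter.Eventually.of_forall fun x => ?_)
    dsimp only
    rw [pd_mul k (cd_diff hg x) (cd_diff (ofReal_contDiff (ha k)) x),
      pd_ofReal k (((ha k).differentiable (by simp)) x)]
  have hint2 : ∀ k : Fin (n+1), Integrable (fun x : Spc n =>
      Complex.I * ((pd k g x * (a k x : ℂ)
        + g x * ((fderiv ℝ (a k) x (EuclideanSpace.single k (1:ℝ)) : ℝ) : ℂ)) * q x)) := by
    intro k
    have h2 : ContDiff ℝ (⊤ : ℕ∞) (fderiv ℝ (a k)) := (ha k).fderiv_right (le_of_eq rfl)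
    have h3 : Continuous fun x : Spc n =>
        ((fderiv ℝ (a k) x (EuclideanSpace.single k (1:ℝ)) : ℝ) : ℂ) :=
      Complex.continuous_ofReal.comp
        ((ContinuousLinearMap.apply ℝ ℝ (EuclideanSpace.single k (1:ℝ))).continuous.comp
          h2.continuous)
    have hcc : Continuous fun x : Spc n => Complex.I * ((pd k g x * (a k x : ℂ)
        + g x * ((fderiv ℝ (a k) x (EuclideanSpace.single k (1:ℝ)) : ℝ) : ℂ)) * q x) :=
      continuous_const.mul ((((pd_contDiff k hg).continuous.mul
        (ofReal_contDiff (ha k)).continuous).add (hg.continuous.mul h3)).mul hq.continuous)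
    exact hcc.integrable_of_hasCompactSupport ((hcs.mul_left).mul_left)
  rw [e1]
  have e3 : ∀ k : Fin (n+1), -Complex.I * ∫ x : Spc n, (g x * (a k x : ℂ)) * pd k q x
      = ∫ x : Spc n, Complex.I * ((pd k g x * (a k x : ℂ)
          + g x * ((fderiv ℝ (a k) x (EuclideanSpace.single k (1:ℝ)) : ℝ) : ℂ)) * q x) := by
    intro k
    rw [e2 k, neg_mul_neg, ← integral_const_mul]
  rw [Finset.sum_congr rfl (fun k _ => e3 k), ← integral_finset_sum _ (fun k _ => hint2 k)]
  rw [← integral_neg]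
  refine integral_congr_ae (Filter.Eventually.of_forall fun x => ?_)
  dsimp only
  unfold Xop dfun
  rw [add_mul]
  simp only [Finset.sum_mul]
  rw [← Finset.sum_add_distrib, ← Finset.sum_neg_distrib]
  exact Finset.sum_congr rfl fun k _ => by ring

/-- For purely imaginary `g`,
`Re (g X v, v) = -(1/2) Re ((Xg + d g) v, v)` for compactly supported smooth `v`. -/
lemma re_ip_first_order {a : Coeffs n} {g v : Spc n → ℂ} (ha : SmoothCoeffs a)
    (hg : ContDiff ℝ (⊤ : ℕ∞) g) (hgim : ∀ x, (starRingEnd ℂ) (g x) = -g x)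
    (hv : ContDiff ℝ (⊤ : ℕ∞) v) (hcs : HasCompactSupport v) :
    (ip (fun x => g x * Xop a v x) v).re
      = -(1/2) * (ip (fun x => (Xop a g x + dfun a x * g x) * v x) v).re := by
  set q : Spc n → ℂ := fun x => v x * (starRingEnd ℂ) (v x) with hq_def
  have hqs : ContDiff ℝ (⊤ : ℕ∞) q := hv.mul (conj_contDiff hv)
  have hqcs : HasCompactSupport q := hcs.mul_right
  set ζ : ℂ := ip (fun x => g x * Xop a v x) v with hζ
  have hconj : (starRingEnd ℂ) ζ = ∫ x : Spc n, g x * (Xop a (fun y => (starRingEnd ℂ) (v y)) x * v x) := by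
    rw [hζ, conj_ip]
    unfold ip
    refine integral_congr_ae (Filter.Eventually.of_forall fun x => ?_)
    dsimp only
    rw [map_mul, hgim x, conj_Xop]
    ring
  have hsum : ζ + (starRingEnd ℂ) ζ = ∫ x : Spc n, g x * Xop a q x := by
    have i1 : Integrable (fun x : Spc n => (g x * Xop a v x) * (starRingEnd ℂ) (v x)) :=
      integK (hg.continuous.mul (Xop_contDiff ha hv).continuous) hv.continuous
        (Or.inr hcs)
    have i2 : Integrable (fun x : Spc n =>
        g x * (Xop a (fun y => (starRingEnd ℂ) (v y)) x * v x)) := by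
      have hcc : Continuous fun x : Spc n =>
          g x * (Xop a (fun y => (starRingEnd ℂ) (v y)) x * v x) :=
        hg.continuous.mul ((Xop_contDiff ha (conj_contDiff hv)).continuous.mul hv.continuous)
      exact hcc.integrable_of_hasCompactSupport ((hcs.mul_left).mul_left)
    rw [hζ, hconj]
    unfold ip
    rw [← integral_add i1 i2]
    refine integral_congr_ae (Filter.Eventually.of_forall fun x => ?_)
    dsimp only
    have : Xop a q x = Xop a v x * (starRingEnd ℂ) (v x)
        + v x * Xop a (fun y => (starRingEnd ℂ) (v y)) x :=
      Xop_mul (cd_diff hv x) (cd_diff (conj_contDiff hv) x)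
    rw [this]
    ring
  have hibp : ∫ x : Spc n, g x * Xop a q x
      = -∫ x : Spc n, (Xop a g x + dfun a x * g x) * q x :=
    ibp_Xop ha hg hqs hqcs
  have hiprw : ip (fun x => (Xop a g x + dfun a x * g x) * v x) v
      = ∫ x : Spc n, (Xop a g x + dfun a x * g x) * q x := by
    unfold ip
    refine integral_congr_ae (Filter.Eventually.of_forall fun x => ?_)
    dsimp only
    rw [hq_def]
    ring
  have h2re : 2 * ζ.re = (ζ + (starRingEnd ℂ) ζ).re := by
    rw [Complex.add_re, Complex.conj_re]
    ring
  rw [hsum, hibp] at h2re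
  rw [hiprw]
  simp only [Complex.neg_re] at h2re
  linarith

lemma l2sq_nonneg (v : Spc n → ℂ) : 0 ≤ l2sq v :=
  integral_nonneg fun x => by positivity

/-- uniform bound for zeroth order terms. -/
lemma ip_zeroth_bound {K : Set (Spc n)} (hK : IsCompact K) {g : Spc n → ℂ}
    (hgc : Continuous g) :
    ∃ C : ℝ, 0 ≤ C ∧ ∀ v : Spc n → ℂ, ContDiff ℝ (⊤ : ℕ∞) v → tsupport v ⊆ K →
      ‖ip (fun x => g x * v x) v‖ ≤ C * l2sq v := by
  obtain ⟨C0, hC0⟩ := hK.exists_bound_of_continuousOn hgc.continuousOn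
  refine ⟨max C0 0, le_max_right _ _, fun v hv hsupp => ?_⟩
  have hcsv : HasCompactSupport v :=
    IsCompact.of_isClosed_subset hK (isClosed_tsupport v) hsupp
  have hb : ∀ x : Spc n, ‖(g x * v x) * (starRingEnd ℂ) (v x)‖ ≤ max C0 0 * ‖v x‖ ^ 2 := by
    intro x
    by_cases hx : x ∈ tsupport v
    · have h1 : ‖(g x * v x) * (starRingEnd ℂ) (v x)‖ = ‖g x‖ * ‖v x‖ ^ 2 := by
        simp [norm_mul]
        ring
      rw [h1]
      have := hC0 x (hsupp hx)
      have hn : (0:ℝ) ≤ ‖v x‖ ^ 2 := by positivity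
      exact mul_le_mul_of_nonneg_right (le_trans this (le_max_left _ _)) hn
    · have hvx : v x = 0 := image_eq_zero_of_notMem_tsupport hx
      have : ((g x * v x) * (starRingEnd ℂ) (v x)) = 0 := by simp [hvx]
      rw [this, norm_zero, hvx]
      positivity
  calc ‖ip (fun x => g x * v x) v‖
      ≤ ∫ x : Spc n, ‖(g x * v x) * (starRingEnd ℂ) (v x)‖ := norm_integral_le_integral_norm _
    _ ≤ ∫ x : Spc n, max C0 0 * ‖v x‖ ^ 2 := by
        refine integral_mono ?_ ?_ hb
        · exact ((hgc.mul hv.continuous).mul (continuous_star.comp hv.continuous)).norm.integrable_of_hasCompactSupport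
            (((hcsv.mul_left).mul_right).norm)
        · have hcs2 : HasCompactSupport (fun x : Spc n => ‖v x‖ ^ 2) :=
            hcsv.comp_left (g := fun z : ℂ => ‖z‖ ^ 2) (by simp)
          exact (continuous_const.mul ((hv.continuous.norm).pow 2)).integrable_of_hasCompactSupport
            hcs2.mul_left
    _ = max C0 0 * l2sq v := integral_const_mul _ _

end Aux4
/-- under (H1), for every compact `K` there is `C_K > 0` such that
`Im(P₁v, v) ≥ ∑ⱼ Re((∑ₖ i c^{j1}_k X_k^*X_j + (i/2)d₁X_j^*X_j
  + (i/2)(c'_j - (X₁d_j) + 2(X_jd₁) + d₁d_j)X_j) v, v) - C_K‖v‖²` for `v ∈ C₀^∞(K)`. -/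
theorem stmt9 (n N : ℕ) (hN : 0 < N)
    (a0 : Coeffs n) (a : Fin N → Coeffs n)
    (c : Fin N → Fin N → Fin N → Spc n → ℂ)
    (ha0 : SmoothCoeffs a0) (ha : ∀ j, SmoothCoeffs (a j))
    (hc : IsInvolutiveWith a c)
    (K : Set (Spc n)) (hK : IsCompact K) :
    ∃ CK : ℝ, 0 < CK ∧ ∀ v : Spc n → ℂ, TestOn K v →
      (∑ j, (ip (fun x =>
          (∑ k, Complex.I * c j ⟨0, hN⟩ k x * Xstar (a k) (Xop (a j) v) x) +
            Complex.I / 2 * dfun (a ⟨0, hN⟩) x * Xstar (a j) (Xop (a j) v) x +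
            Complex.I / 2 *
              (cprime a c ⟨0, hN⟩ j x - Xop (a ⟨0, hN⟩) (dfun (a j)) x +
                2 * Xop (a j) (dfun (a ⟨0, hN⟩)) x +
                dfun (a ⟨0, hN⟩) x * dfun (a j) x) * Xop (a j) v x) v).re) -
          CK * l2sq v ≤
        (ip (P1 a0 a ⟨0, hN⟩ v) v).im := by
  obtain ⟨hcim, hcomm⟩ := hc
  have csm : ∀ j k l, ContDiff ℝ (⊤ : ℕ∞) (c j k l) := fun j k l => (hcim j k l).1
  have cre : ∀ j k l, ∀ x, (c j k l x).re = 0 := fun j k l => (hcim j k l).2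
  set j1 : Fin N := ⟨0, hN⟩ with hj1
  -- smooth data
  have hd1sm : ContDiff ℝ (⊤ : ℕ∞) (dfun (a j1)) := dfun_contDiff (ha j1)
  have hdjsm : ∀ j, ContDiff ℝ (⊤ : ℕ∞) (dfun (a j)) := fun j => dfun_contDiff (ha j)
  have hg0sm : ∀ j : Fin N, ContDiff ℝ (⊤ : ℕ∞) (Xop (a j) (dfun (a j1))) :=
    fun j => Xop_contDiff (ha j) hd1sm
  have hXcsm : ∀ (k p q r : Fin N), ContDiff ℝ (⊤ : ℕ∞) (Xop (a k) (c p q r)) :=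
    fun k p q r => Xop_contDiff (ha k) (csm p q r)
  -- the operators appearing as coefficients
  set Mf : Fin N → Spc n → ℂ := fun j x =>
    cprime a c j1 j x - Xop (a j1) (dfun (a j)) x + 2 * Xop (a j) (dfun (a j1)) x +
      dfun (a j1) x * dfun (a j) x with hMf
  set Gam : Fin N → Spc n → ℂ := fun j x => ∑ k, ∑ l, c l k j x with hGam
  set Hf : Fin N → Spc n → ℂ := fun j x =>
    -Complex.I * Xop (a j) (dfun (a j1)) x + (∑ k, Complex.I * Xop (a k) (c j j1 k) x) +
      Complex.I / 2 * Xop (a j) (dfun (a j1)) x - Complex.I / 2 * Mf j x with hHf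
  set htil : Fin N → Spc n → ℂ := fun j x => Hf j x + Complex.I / 2 * Gam j x with hhtil
  have hMsm : ∀ j, ContDiff ℝ (⊤ : ℕ∞) (Mf j) := by
    intro j
    rw [hMf]
    have hcp : ContDiff ℝ (⊤ : ℕ∞) (fun x => cprime a c j1 j x) := by
      unfold cprime
      refine ContDiff.sum fun k _ => ?_
      exact (((ContDiff.sum fun l _ => csm l k j).add (hXcsm k k j1 j)).add
        ((hdjsm k).mul (csm k j1 j))).sub
        ((contDiff_const.mul (hdjsm k)).mul (csm j j1 k))
    exact ((hcp.sub (Xop_contDiff (ha j1) (hdjsm j))).add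
      (contDiff_const.mul (hg0sm j))).add (hd1sm.mul (hdjsm j))
  have hGsm : ∀ j, ContDiff ℝ (⊤ : ℕ∞) (Gam j) := by
    intro j
    rw [hGam]
    exact ContDiff.sum fun k _ => ContDiff.sum fun l _ => csm l k j
  have hHsm : ∀ j, ContDiff ℝ (⊤ : ℕ∞) (Hf j) := by
    intro j
    rw [hHf]
    exact (((contDiff_const.mul (hg0sm j)).add
      (ContDiff.sum fun k _ => contDiff_const.mul (hXcsm k j j1 k))).add
      (contDiff_const.mul (hg0sm j))).sub (contDiff_const.mul (hMsm j))
  have hhtilsm : ∀ j, ContDiff ℝ (⊤ : ℕ∞) (htil j) := by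
    intro j
    rw [hhtil]
    exact (hHsm j).add (contDiff_const.mul (hGsm j))
  -- purely imaginary coefficients
  have hA : ∀ (j : Fin N) (x : Spc n),
      (starRingEnd ℂ) (Xop (a j) (dfun (a j1)) x) = Xop (a j) (dfun (a j1)) x :=
    fun j x => conj_eq_self_of_im_zero (im_Xop_of_imag re_dfun (cd_diff hd1sm) x)
  have hE : ∀ (j : Fin N) (x : Spc n),
      (starRingEnd ℂ) (Xop (a j1) (dfun (a j)) x) = Xop (a j1) (dfun (a j)) x :=
    fun j x => conj_eq_self_of_im_zero (im_Xop_of_imag re_dfun (cd_diff (hdjsm j)) x)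
  have hB : ∀ (k p q r : Fin N) (x : Spc n),
      (starRingEnd ℂ) (Xop (a k) (c p q r) x) = Xop (a k) (c p q r) x :=
    fun k p q r x => conj_eq_self_of_im_zero
      (im_Xop_of_imag (cre p q r) (cd_diff (csm p q r)) x)
  have hCc : ∀ (p q r : Fin N) (x : Spc n), (starRingEnd ℂ) (c p q r x) = -c p q r x :=
    fun p q r x => conj_eq_neg_of_re_zero (cre p q r x)
  have hD : ∀ (j : Fin N) (x : Spc n), (starRingEnd ℂ) (dfun (a j) x) = -dfun (a j) x :=
    fun j x => conj_dfun x
  have hconjGam : ∀ (j : Fin N) (x : Spc n), (starRingEnd ℂ) (Gam j x) = -Gam j x := by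
    intro j x
    rw [hGam]
    simp only [map_sum, hCc, Finset.sum_neg_distrib]
  have hconjcp : ∀ (j : Fin N) (x : Spc n),
      (starRingEnd ℂ) (cprime a c j1 j x) = cprime a c j1 j x - 2 * Gam j x := by
    intro j x
    unfold cprime
    rw [hGam]
    dsimp only
    rw [Finset.mul_sum, ← Finset.sum_sub_distrib, map_sum]
    refine Finset.sum_congr rfl fun k _ => ?_
    simp only [map_add, map_sub, map_mul, map_sum, map_ofNat, hCc, hD, hB,
      Finset.sum_neg_distrib]
    ring
  have hconjM : ∀ (j : Fin N) (x : Spc n),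
      (starRingEnd ℂ) (Mf j x) = Mf j x - 2 * Gam j x := by
    intro j x
    rw [hMf]
    dsimp only
    simp only [map_add, map_sub, map_mul, map_ofNat, hconjcp, hA, hE, hD]
    ring
  have hconjH : ∀ (j : Fin N) (x : Spc n),
      (starRingEnd ℂ) (Hf j x) = -Hf j x - Complex.I * Gam j x := by
    intro j x
    rw [hHf]
    dsimp only
    simp only [map_add, map_sub, map_mul, map_sum, map_neg, map_div₀, map_ofNat,
      Complex.conj_I, hA, hB, hconjM, neg_mul, Finset.sum_neg_distrib]
    ring
  have hconjhtil : ∀ j, ∀ x, (starRingEnd ℂ) (htil j x) = -htil j x := by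
    intro j x
    rw [hhtil]
    dsimp only
    simp only [map_add, map_mul, map_div₀, map_ofNat, Complex.conj_I, hconjH, hconjGam]
    ring
  -- bounds for the zeroth order terms
  have hmcont : ∀ j, Continuous (fun x => Xop (a j) (htil j) x + dfun (a j) x * htil j x) :=
    fun j => ((Xop_contDiff (ha j) (hhtilsm j)).continuous).add
      ((hdjsm j).continuous.mul (hhtilsm j).continuous)
  choose Cm hCm0 hCmb using fun j : Fin N =>
    ip_zeroth_bound hK (hmcont j)
  obtain ⟨C0, hC00, hC0b⟩ := ip_zeroth_bound hK
    (show Continuous (fun x => -dfun a0 x) from ((dfun_contDiff ha0).continuous).neg)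
  have hCKpos : (0:ℝ) < 1 + (1/2) * (C0 + ∑ j, Cm j) := by
    have h1 : 0 ≤ ∑ j, Cm j := Finset.sum_nonneg fun j _ => hCm0 j
    linarith
  refine ⟨1 + (1/2) * (C0 + ∑ j, Cm j), hCKpos, ?_⟩
  intro v hv
  have hv1 : ContDiff ℝ (⊤ : ℕ∞) v := hv.1
  have hcsv : HasCompactSupport v := TestOn.hcs hK hv
  have hwsm : ∀ j, ContDiff ℝ (⊤ : ℕ∞) (Xop (a j) v) := fun j => Xop_contDiff (ha j) hv1
  have hwcs : ∀ j, HasCompactSupport (Xop (a j) v) := fun j => hcs_Xop hcsv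
  have hwc : ∀ j, Continuous (Xop (a j) v) := fun j => (hwsm j).continuous
  -- the basic complex quantities
  set z : Fin N → ℂ := fun j => ip (Xop (a j) v) (Xop (a j1) (Xop (a j) v)) with hzd
  set y : Fin N → Fin N → ℂ :=
    fun j l => ip (Xop (a j) v) (fun x => c j j1 l x * Xop (a l) v x) with hyd
  set ze : Fin N → ℂ :=
    fun j => ip (Xop (a j) v) (fun x => dfun (a j1) x * Xop (a j) v x) with hzed
  set t : Fin N → ℂ :=
    fun j => ip (Xop (a j) v) (fun x => Xop (a j) (dfun (a j1)) x * v x) with htd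
  set x0 : ℂ := ip (Xop a0 v) v with hx0d
  set yp : Fin N → Fin N → ℂ :=
    fun j k => ip (Xop (a j) v) (fun x => Complex.I * c j j1 k x * Xop (a k) v x) with hypd
  set up : Fin N → Fin N → ℂ :=
    fun j k => ip (Xop (a j) v) (fun x => Complex.I * Xop (a k) (c j j1 k) x * v x) with hupd
  set p : Fin N → ℂ :=
    fun j => ip (Xop (a j) v) (fun x => Complex.I / 2 * dfun (a j1) x * Xop (a j) v x) with hpd2
  set q : Fin N → ℂ :=
    fun j => ip (Xop (a j) v) (fun x => Complex.I / 2 * Xop (a j) (dfun (a j1)) x * v x) with hqd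
  set rr : Fin N → ℂ :=
    fun j => ip (fun x => Complex.I / 2 * Mf j x * Xop (a j) v x) v with hrrd
  -- STEP L : expansion of (P1 v, v)
  have hSsm : ContDiff ℝ (⊤ : ℕ∞) (sumXsX a v) := by
    unfold sumXsX
    exact ContDiff.sum fun j _ => Xstar_contDiff (ha j) (hwsm j)
  have hScs : HasCompactSupport (sumXsX a v) := by
    unfold sumXsX
    exact hcs_sum fun j => hcs_Xstar (hwcs j)
  have L0 : ip (P1 a0 a j1 v) v = ip (Xop (a j1) (sumXsX a v)) v + ip (Xop a0 v) v := by
    rw [show P1 a0 a j1 v = fun x => Xop (a j1) (sumXsX a v) x + Xop a0 v x from rfl]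
    exact ip_add_left
      (integK (Xop_contDiff (ha j1) hSsm).continuous hv1.continuous (Or.inl (hcs_Xop hScs)))
      (integK (Xop_contDiff ha0 hv1).continuous hv1.continuous (Or.inl (hcs_Xop hcsv)))
  have L1 : ip (Xop (a j1) (sumXsX a v)) v = ip (sumXsX a v) (Xstar (a j1) v) :=
    ip_Xop_left (ha j1) hSsm hv1 (Or.inl hScs)
  have L2 : ip (sumXsX a v) (Xstar (a j1) v)
      = ip (sumXsX a v) (Xop (a j1) v) + ip (sumXsX a v) (fun x => dfun (a j1) x * v x) := by
    rw [show Xstar (a j1) v = fun x => Xop (a j1) v x + dfun (a j1) x * v x from rfl]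
    exact ip_add_right
      (integK hSsm.continuous (Xop_contDiff (ha j1) hv1).continuous (Or.inl hScs))
      (integK hSsm.continuous (hd1sm.continuous.mul hv1.continuous) (Or.inl hScs))
  have L3 : ip (sumXsX a v) (Xop (a j1) v)
      = ∑ j, ip (Xstar (a j) (Xop (a j) v)) (Xop (a j1) v) := by
    rw [show sumXsX a v = fun x => ∑ j, Xstar (a j) (Xop (a j) v) x from rfl]
    exact ip_sum_left fun j => integK (Xstar_contDiff (ha j) (hwsm j)).continuous
      (Xop_contDiff (ha j1) hv1).continuous (Or.inl (hcs_Xstar (hwcs j)))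
  have L45 : ∀ j, ip (Xstar (a j) (Xop (a j) v)) (Xop (a j1) v) = z j + ∑ l, y j l := by
    intro j
    rw [ip_Xstar_left (ha j) (hwsm j) (Xop_contDiff (ha j1) hv1) (Or.inl (hwcs j))]
    have hpt : ∀ x, Xop (a j) (Xop (a j1) v) x
        = Xop (a j1) (Xop (a j) v) x + ∑ l, c j j1 l x * Xop (a l) v x := by
      intro x
      have h := hcomm j j1 v hv1 x
      linear_combination h
    rw [ip_congr_right hpt]
    rw [ip_add_right
      (integK (hwc j) (Xop_contDiff (ha j1) (hwsm j)).continuous (Or.inl (hwcs j)))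
      (integK (hwc j) (by
        exact continuous_finset_sum _ fun l _ => (csm j j1 l).continuous.mul (hwc l))
        (Or.inl (hwcs j)))]
    rw [ip_sum_right (w := fun l x => c j j1 l x * Xop (a l) v x) fun l => integK (hwc j)
      ((csm j j1 l).continuous.mul (hwc l)) (Or.inl (hwcs j))]
  have L6 : ip (sumXsX a v) (fun x => dfun (a j1) x * v x) = ∑ j, (ze j + t j) := by
    rw [show sumXsX a v = fun x => ∑ j, Xstar (a j) (Xop (a j) v) x from rfl]
    rw [ip_sum_left (w := fun x => dfun (a j1) x * v x) fun j => integK (Xstar_contDiff (ha j) (hwsm j)).continuous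
      (hd1sm.continuous.mul hv1.continuous) (Or.inl (hcs_Xstar (hwcs j)))]
    refine Finset.sum_congr rfl fun j _ => ?_
    rw [ip_Xstar_left (ha j) (hwsm j) (hd1sm.mul hv1) (Or.inl (hwcs j))]
    have hpt : ∀ x, Xop (a j) (fun y => dfun (a j1) y * v y) x
        = dfun (a j1) x * Xop (a j) v x + Xop (a j) (dfun (a j1)) x * v x := by
      intro x
      rw [Xop_mul (cd_diff hd1sm x) (cd_diff hv1 x)]
      ring
    rw [ip_congr_right hpt]
    exact ip_add_right
      (integK (hwc j) (hd1sm.continuous.mul (hwc j)) (Or.inl (hwcs j)))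
      (integK (hwc j) ((hg0sm j).continuous.mul hv1.continuous) (Or.inl (hwcs j)))
  have LL : ip (P1 a0 a j1 v) v = (∑ j, (z j + (∑ l, y j l) + ze j + t j)) + x0 := by
    rw [L0, L1, L2, L3, L6, Finset.sum_congr rfl fun j _ => L45 j, hx0d,
      ← Finset.sum_add_distrib]
    congr 1
    refine Finset.sum_congr rfl fun j _ => by ring
  -- STEP R : expansion of (G_j v, v)
  have hR : ∀ j, ip (fun x =>
      (∑ k, Complex.I * c j j1 k x * Xstar (a k) (Xop (a j) v) x) +
        Complex.I / 2 * dfun (a j1) x * Xstar (a j) (Xop (a j) v) x +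
        Complex.I / 2 *
          (cprime a c j1 j x - Xop (a j1) (dfun (a j)) x +
            2 * Xop (a j) (dfun (a j1)) x +
            dfun (a j1) x * dfun (a j) x) * Xop (a j) v x) v
      = (∑ k, (yp j k + up j k)) + p j + q j + rr j := by
    intro j
    have hT1c : Continuous (fun x => ∑ k, Complex.I * c j j1 k x * Xstar (a k) (Xop (a j) v) x) :=
      continuous_finset_sum _ fun k _ => (continuous_const.mul (csm j j1 k).continuous).mul
        (Xstar_contDiff (ha k) (hwsm j)).continuous
    have hT2c : Continuous (fun x => Complex.I / 2 * dfun (a j1) x * Xstar (a j) (Xop (a j) v) x) :=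
      (continuous_const.mul hd1sm.continuous).mul (Xstar_contDiff (ha j) (hwsm j)).continuous
    have hT3c : Continuous (fun x => Complex.I / 2 * Mf j x * Xop (a j) v x) :=
      (continuous_const.mul (hMsm j).continuous).mul (hwc j)
    have i1 : Integrable (fun x : Spc n =>
        (∑ k, Complex.I * c j j1 k x * Xstar (a k) (Xop (a j) v) x) * (starRingEnd ℂ) (v x)) :=
      integK hT1c hv1.continuous (Or.inr hcsv)
    have i2 : Integrable (fun x : Spc n =>
        (Complex.I / 2 * dfun (a j1) x * Xstar (a j) (Xop (a j) v) x) * (starRingEnd ℂ) (v x)) :=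
      integK hT2c hv1.continuous (Or.inr hcsv)
    have i3 : Integrable (fun x : Spc n =>
        (Complex.I / 2 * Mf j x * Xop (a j) v x) * (starRingEnd ℂ) (v x)) :=
      integK hT3c hv1.continuous (Or.inr hcsv)
    have i12 : Integrable (fun x : Spc n =>
        ((∑ k, Complex.I * c j j1 k x * Xstar (a k) (Xop (a j) v) x)
          + Complex.I / 2 * dfun (a j1) x * Xstar (a j) (Xop (a j) v) x)
          * (starRingEnd ℂ) (v x)) :=
      (i1.add i2).congr (Filter.Eventually.of_forall fun x => by simp only [Pi.add_apply]; ring)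
    have split : ip (fun x =>
        (∑ k, Complex.I * c j j1 k x * Xstar (a k) (Xop (a j) v) x) +
          Complex.I / 2 * dfun (a j1) x * Xstar (a j) (Xop (a j) v) x +
          Complex.I / 2 *
            (cprime a c j1 j x - Xop (a j1) (dfun (a j)) x +
              2 * Xop (a j) (dfun (a j1)) x +
              dfun (a j1) x * dfun (a j) x) * Xop (a j) v x) v
        = ip (fun x => ∑ k, Complex.I * c j j1 k x * Xstar (a k) (Xop (a j) v) x) v
          + ip (fun x => Complex.I / 2 * dfun (a j1) x * Xstar (a j) (Xop (a j) v) x) v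
          + ip (fun x => Complex.I / 2 * Mf j x * Xop (a j) v x) v := by
      rw [show (fun x =>
        (∑ k, Complex.I * c j j1 k x * Xstar (a k) (Xop (a j) v) x) +
          Complex.I / 2 * dfun (a j1) x * Xstar (a j) (Xop (a j) v) x +
          Complex.I / 2 *
            (cprime a c j1 j x - Xop (a j1) (dfun (a j)) x +
              2 * Xop (a j) (dfun (a j1)) x +
              dfun (a j1) x * dfun (a j) x) * Xop (a j) v x)
        = (fun x =>
        ((∑ k, Complex.I * c j j1 k x * Xstar (a k) (Xop (a j) v) x) +
          Complex.I / 2 * dfun (a j1) x * Xstar (a j) (Xop (a j) v) x) +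
          Complex.I / 2 * Mf j x * Xop (a j) v x) from rfl]
      rw [ip_add_left i12 i3, ip_add_left i1 i2]
    rw [split]
    -- first group
    have hT1 : ip (fun x => ∑ k, Complex.I * c j j1 k x * Xstar (a k) (Xop (a j) v) x) v
        = ∑ k, (yp j k + up j k) := by
      rw [ip_sum_left (u := fun k x => Complex.I * c j j1 k x * Xstar (a k) (Xop (a j) v) x) fun k => integK ((continuous_const.mul (csm j j1 k).continuous).mul
        (Xstar_contDiff (ha k) (hwsm j)).continuous) hv1.continuous (Or.inr hcsv)]
      refine Finset.sum_congr rfl fun k _ => ?_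
      have ea : ip (fun x => Complex.I * c j j1 k x * Xstar (a k) (Xop (a j) v) x) v
          = ip (Xstar (a k) (Xop (a j) v)) (fun x => Complex.I * c j j1 k x * v x) := by
        unfold ip
        refine integral_congr_ae (Filter.Eventually.of_forall fun x => ?_)
        dsimp only
        simp only [map_mul, Complex.conj_I, hCc]
        ring
      rw [ea, ip_Xstar_left (ha k) (hwsm j)
        ((contDiff_const.mul (csm j j1 k)).mul hv1) (Or.inl (hwcs j))]
      have eb : ∀ x, Xop (a k) (fun y => Complex.I * c j j1 k y * v y) x
          = Complex.I * c j j1 k x * Xop (a k) v x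
            + Complex.I * Xop (a k) (c j j1 k) x * v x := by
        intro x
        have h1 := Xop_mul (a := a k) (u := fun y => Complex.I * c j j1 k y) (w := v)
          (cd_diff (contDiff_const.mul (csm j j1 k)) x) (cd_diff hv1 x)
        have h2 : Xop (a k) (fun y => Complex.I * c j j1 k y) x
            = Complex.I * Xop (a k) (c j j1 k) x :=
          Xop_const_mul Complex.I (cd_diff (csm j j1 k) x)
        rw [h1, h2]
        ring
      rw [ip_congr_right eb]
      exact ip_add_right
        (integK (hwc j) ((continuous_const.mul (csm j j1 k).continuous).mul (hwc k))
          (Or.inl (hwcs j)))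
        (integK (hwc j) ((continuous_const.mul (hXcsm k j j1 k).continuous).mul hv1.continuous)
          (Or.inl (hwcs j)))
    -- second group
    have hT2 : ip (fun x => Complex.I / 2 * dfun (a j1) x * Xstar (a j) (Xop (a j) v) x) v
        = p j + q j := by
      have ec : ip (fun x => Complex.I / 2 * dfun (a j1) x * Xstar (a j) (Xop (a j) v) x) v
          = ip (Xstar (a j) (Xop (a j) v)) (fun x => Complex.I / 2 * dfun (a j1) x * v x) := by
        unfold ip
        refine integral_congr_ae (Filter.Eventually.of_forall fun x => ?_)
        dsimp only
        simp only [map_mul, map_div₀, Complex.conj_I, map_ofNat, hD]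
        ring
      rw [ec, ip_Xstar_left (ha j) (hwsm j)
        ((contDiff_const.mul hd1sm).mul hv1) (Or.inl (hwcs j))]
      have ed : ∀ x, Xop (a j) (fun y => Complex.I / 2 * dfun (a j1) y * v y) x
          = Complex.I / 2 * dfun (a j1) x * Xop (a j) v x
            + Complex.I / 2 * Xop (a j) (dfun (a j1)) x * v x := by
        intro x
        have h1 := Xop_mul (a := a j) (u := fun y => Complex.I / 2 * dfun (a j1) y) (w := v)
          (cd_diff (contDiff_const.mul hd1sm) x) (cd_diff hv1 x)
        have h2 : Xop (a j) (fun y => Complex.I / 2 * dfun (a j1) y) x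
            = Complex.I / 2 * Xop (a j) (dfun (a j1)) x :=
          Xop_const_mul (Complex.I / 2) (cd_diff hd1sm x)
        rw [h1, h2]
        ring
      rw [ip_congr_right ed]
      exact ip_add_right
        (integK (hwc j) ((continuous_const.mul hd1sm.continuous).mul (hwc j))
          (Or.inl (hwcs j)))
        (integK (hwc j) ((continuous_const.mul (hg0sm j).continuous).mul hv1.continuous)
          (Or.inl (hwcs j)))
    rw [hT1, hT2, hrrd]
    dsimp only
    ring
  -- the exact-cancellation identities
  have hM1 : ∀ j, ze j = (starRingEnd ℂ) (z j) - z j := by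
    intro j
    have h1 : (starRingEnd ℂ) (z j) = ip (Xop (a j1) (Xop (a j) v)) (Xop (a j) v) := by
      rw [hzd]; exact conj_ip _ _
    have h2 : ip (Xop (a j1) (Xop (a j) v)) (Xop (a j) v)
        = ip (Xop (a j) v) (Xstar (a j1) (Xop (a j) v)) :=
      ip_Xop_left (ha j1) (hwsm j) (hwsm j) (Or.inl (hwcs j))
    have h3 : ip (Xop (a j) v) (Xstar (a j1) (Xop (a j) v)) = z j + ze j := by
      rw [show Xstar (a j1) (Xop (a j) v)
        = fun x => Xop (a j1) (Xop (a j) v) x + dfun (a j1) x * Xop (a j) v x from rfl]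
      exact ip_add_right
        (integK (hwc j) (Xop_contDiff (ha j1) (hwsm j)).continuous (Or.inl (hwcs j)))
        (integK (hwc j) (hd1sm.continuous.mul (hwc j)) (Or.inl (hwcs j)))
    have h := h1.trans (h2.trans h3)
    linear_combination -h
  have hM2 : ∀ j, p j = -(Complex.I / 2) * ze j := by
    intro j
    rw [hpd2, hzed]
    exact ip_right_conj_fac (fun x => by
      simp only [map_mul, map_div₀, Complex.conj_I, map_ofNat, hD]
      ring)
  have hM3 : ∀ j l, yp j l = -Complex.I * y j l := by
    intro j l
    rw [hypd, hyd]
    exact ip_right_conj_fac (fun x => by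
      simp only [map_mul, Complex.conj_I, hCc]
      ring)
  have hM7 : x0 = (starRingEnd ℂ) x0 + ip v (fun x => dfun a0 x * v x) := by
    have h1 : (starRingEnd ℂ) x0 = ip v (Xop a0 v) := by rw [hx0d]; exact conj_ip _ _
    have h2 : x0 = ip v (Xstar a0 v) := by
      rw [hx0d]; exact ip_Xop_left ha0 hv1 hv1 (Or.inl hcsv)
    have h3 : ip v (Xstar a0 v) = ip v (Xop a0 v) + ip v (fun x => dfun a0 x * v x) := by
      rw [show Xstar a0 v = fun x => Xop a0 v x + dfun a0 x * v x from rfl]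
      exact ip_add_right
        (integK hv1.continuous (Xop_contDiff ha0 hv1).continuous (Or.inl hcsv))
        (integK hv1.continuous ((dfun_contDiff ha0).continuous.mul hv1.continuous)
          (Or.inl hcsv))
    rw [h1, h2]
    exact h3
  -- first order collapse
  have tswap : ∀ j, t j = ip (fun x => Xop (a j) (dfun (a j1)) x * Xop (a j) v x) v := by
    intro j
    rw [htd]
    dsimp only
    rw [ip_swap_mul (g := fun x => Xop (a j) (dfun (a j1)) x) (u := Xop (a j) v) (v0 := v)]
    exact ip_congr fun x => by rw [hA j x]
  have upswap : ∀ j k, up j k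
      = ip (fun x => -Complex.I * Xop (a k) (c j j1 k) x * Xop (a j) v x) v := by
    intro j k
    rw [hupd]
    dsimp only
    rw [ip_swap_mul (g := fun x => Complex.I * Xop (a k) (c j j1 k) x) (u := Xop (a j) v)
      (v0 := v)]
    refine ip_congr fun x => ?_
    simp only [map_mul, Complex.conj_I, hB]
    all_goals ring
  have qswap : ∀ j, q j
      = ip (fun x => -(Complex.I / 2) * Xop (a j) (dfun (a j1)) x * Xop (a j) v x) v := by
    intro j
    rw [hqd]
    dsimp only
    rw [ip_swap_mul (g := fun x => Complex.I / 2 * Xop (a j) (dfun (a j1)) x) (u := Xop (a j) v)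
      (v0 := v)]
    refine ip_congr fun x => ?_
    simp only [map_mul, map_div₀, Complex.conj_I, map_ofNat, hA]
    all_goals ring
  have hCC : ∀ j, ip (fun x => Hf j x * Xop (a j) v x) v
      = -Complex.I * t j - (∑ k, up j k) - q j - rr j := by
    intro j
    have c1 : Continuous (fun x : Spc n =>
        -Complex.I * Xop (a j) (dfun (a j1)) x * Xop (a j) v x) :=
      (continuous_const.mul (hg0sm j).continuous).mul (hwc j)
    have c2 : Continuous (fun x : Spc n =>
        ∑ k, Complex.I * Xop (a k) (c j j1 k) x * Xop (a j) v x) :=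
      continuous_finset_sum _ fun k _ =>
        (continuous_const.mul (hXcsm k j j1 k).continuous).mul (hwc j)
    have c3 : Continuous (fun x : Spc n =>
        Complex.I / 2 * Xop (a j) (dfun (a j1)) x * Xop (a j) v x) :=
      (continuous_const.mul (hg0sm j).continuous).mul (hwc j)
    have c4 : Continuous (fun x : Spc n =>
        -(Complex.I / 2 * Mf j x) * Xop (a j) v x) :=
      ((continuous_const.mul (hMsm j).continuous).neg).mul (hwc j)
    have j1' : Integrable (fun x : Spc n =>
        (-Complex.I * Xop (a j) (dfun (a j1)) x * Xop (a j) v x) * (starRingEnd ℂ) (v x)) :=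
      integK c1 hv1.continuous (Or.inr hcsv)
    have j2' : Integrable (fun x : Spc n =>
        (∑ k, Complex.I * Xop (a k) (c j j1 k) x * Xop (a j) v x) * (starRingEnd ℂ) (v x)) :=
      integK c2 hv1.continuous (Or.inr hcsv)
    have j3' : Integrable (fun x : Spc n =>
        (Complex.I / 2 * Xop (a j) (dfun (a j1)) x * Xop (a j) v x) * (starRingEnd ℂ) (v x)) :=
      integK c3 hv1.continuous (Or.inr hcsv)
    have j4' : Integrable (fun x : Spc n =>
        (-(Complex.I / 2 * Mf j x) * Xop (a j) v x) * (starRingEnd ℂ) (v x)) :=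
      integK c4 hv1.continuous (Or.inr hcsv)
    have j12 : Integrable (fun x : Spc n =>
        (-Complex.I * Xop (a j) (dfun (a j1)) x * Xop (a j) v x
          + ∑ k, Complex.I * Xop (a k) (c j j1 k) x * Xop (a j) v x)
          * (starRingEnd ℂ) (v x)) :=
      (j1'.add j2').congr (Filter.Eventually.of_forall fun x => by simp only [Pi.add_apply]; ring)
    have j123 : Integrable (fun x : Spc n =>
        ((-Complex.I * Xop (a j) (dfun (a j1)) x * Xop (a j) v x
          + ∑ k, Complex.I * Xop (a k) (c j j1 k) x * Xop (a j) v x)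
          + Complex.I / 2 * Xop (a j) (dfun (a j1)) x * Xop (a j) v x)
          * (starRingEnd ℂ) (v x)) :=
      (j12.add j3').congr (Filter.Eventually.of_forall fun x => by simp only [Pi.add_apply]; ring)
    have e0 : ip (fun x => Hf j x * Xop (a j) v x) v
        = ip (fun x =>
            ((-Complex.I * Xop (a j) (dfun (a j1)) x * Xop (a j) v x
              + ∑ k, Complex.I * Xop (a k) (c j j1 k) x * Xop (a j) v x)
              + Complex.I / 2 * Xop (a j) (dfun (a j1)) x * Xop (a j) v x)
            + -(Complex.I / 2 * Mf j x) * Xop (a j) v x) v := by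
      refine ip_congr fun x => ?_
      rw [hHf]
      dsimp only
      rw [← Finset.sum_mul]
      ring
    rw [e0, ip_add_left j123 j4', ip_add_left j12 j3', ip_add_left j1' j2']
    have f1 : ip (fun x => -Complex.I * Xop (a j) (dfun (a j1)) x * Xop (a j) v x) v
        = -Complex.I * t j := by
      rw [tswap j, ← ip_const_mul]
      exact ip_congr fun x => by ring
    have f2 : ip (fun x => ∑ k, Complex.I * Xop (a k) (c j j1 k) x * Xop (a j) v x) v
        = -∑ k, up j k := by
      rw [ip_sum_left (u := fun k x => Complex.I * Xop (a k) (c j j1 k) x * Xop (a j) v x) fun k => integK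
        ((continuous_const.mul (hXcsm k j j1 k).continuous).mul (hwc j)) hv1.continuous
        (Or.inr hcsv), ← Finset.sum_neg_distrib]
      refine Finset.sum_congr rfl fun k _ => ?_
      rw [upswap j k,
        show (fun x => Complex.I * Xop (a k) (c j j1 k) x * Xop (a j) v x)
          = (fun x => -(-Complex.I * Xop (a k) (c j j1 k) x * Xop (a j) v x)) from
          funext fun x => by ring,
        ip_neg_left]
    have f3 : ip (fun x => Complex.I / 2 * Xop (a j) (dfun (a j1)) x * Xop (a j) v x) v
        = -q j := by
      rw [qswap j,
        show (fun x => Complex.I / 2 * Xop (a j) (dfun (a j1)) x * Xop (a j) v x)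
          = (fun x => -(-(Complex.I / 2) * Xop (a j) (dfun (a j1)) x * Xop (a j) v x)) from
          funext fun x => by ring,
        ip_neg_left]
    have f4 : ip (fun x => -(Complex.I / 2 * Mf j x) * Xop (a j) v x) v = -rr j := by
      rw [hrrd,
        show (fun x => -(Complex.I / 2 * Mf j x) * Xop (a j) v x)
          = (fun x => -(Complex.I / 2 * Mf j x * Xop (a j) v x)) from
          funext fun x => by ring,
        ip_neg_left]
    rw [f1, f2, f3, f4]
    ring
  -- replace H by htil under the j-sum
  have hintH : ∀ j, Integrable (fun x : Spc n =>
      (Hf j x * Xop (a j) v x) * (starRingEnd ℂ) (v x)) :=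
    fun j => integK ((hHsm j).continuous.mul (hwc j)) hv1.continuous (Or.inr hcsv)
  have hinthtil : ∀ j, Integrable (fun x : Spc n =>
      (htil j x * Xop (a j) v x) * (starRingEnd ℂ) (v x)) :=
    fun j => integK ((hhtilsm j).continuous.mul (hwc j)) hv1.continuous (Or.inr hcsv)
  have hC2 : ∑ j, ip (fun x => Hf j x * Xop (a j) v x) v
      = ∑ j, ip (fun x => htil j x * Xop (a j) v x) v := by
    rw [← ip_sum_left hintH, ← ip_sum_left hinthtil]
    refine ip_congr fun x => ?_
    have key : ∑ j, Gam j x * Xop (a j) v x = 0 := by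
      rw [hGam]
      dsimp only
      have e1 : ∀ j : Fin N, (∑ k, ∑ l, c l k j x) * Xop (a j) v x
          = ∑ k, ∑ l, c l k j x * Xop (a j) v x := by
        intro j
        rw [Finset.sum_mul]
        exact Finset.sum_congr rfl fun k _ => by rw [Finset.sum_mul]
      rw [Finset.sum_congr rfl fun j _ => e1 j, Finset.sum_comm]
      rw [Finset.sum_congr rfl fun k (_ : k ∈ Finset.univ) => Finset.sum_comm]
      have e2 : ∀ k l : Fin N, ∑ j, c l k j x * Xop (a j) v x
          = Xop (a l) (Xop (a k) v) x - Xop (a k) (Xop (a l) v) x :=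
        fun k l => (hcomm l k v hv1 x).symm
      rw [Finset.sum_congr rfl fun k (_ : k ∈ Finset.univ) =>
        Finset.sum_congr rfl fun l (_ : l ∈ Finset.univ) => e2 k l]
      rw [show (∑ k : Fin N, ∑ l : Fin N,
          (Xop (a l) (Xop (a k) v) x - Xop (a k) (Xop (a l) v) x))
        = (∑ k : Fin N, ∑ l : Fin N, Xop (a l) (Xop (a k) v) x)
          - (∑ k : Fin N, ∑ l : Fin N, Xop (a k) (Xop (a l) v) x) from by
        rw [← Finset.sum_sub_distrib]
        exact Finset.sum_congr rfl fun k _ => Finset.sum_sub_distrib _ _]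
      rw [Finset.sum_comm (f := fun k l => Xop (a l) (Xop (a k) v) x)]
      exact sub_self _
    rw [hhtil]
    dsimp only
    have e3 : ∀ j : Fin N, (Hf j x + Complex.I / 2 * Gam j x) * Xop (a j) v x
        = Hf j x * Xop (a j) v x + Complex.I / 2 * (Gam j x * Xop (a j) v x) := by
      intro j; ring
    rw [Finset.sum_congr rfl fun j _ => e3 j, Finset.sum_add_distrib,
      ← Finset.mul_sum, key]
    ring
  have hC3 : ∀ j, (ip (fun x => htil j x * Xop (a j) v x) v).re
      = -(1/2) * (ip (fun x =>
          (Xop (a j) (htil j) x + dfun (a j) x * htil j x) * v x) v).re :=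
    fun j => re_ip_first_order (ha j) (hhtilsm j) (hconjhtil j) hv1 hcsv
  -- realification
  have reHf : ∀ j, (ip (fun x => Hf j x * Xop (a j) v x) v).re
      = (t j).im - (∑ k, (up j k).re) - (q j).re - (rr j).re := by
    intro j
    rw [hCC j]
    simp only [Complex.sub_re, Complex.re_sum, Complex.mul_re, Complex.neg_re, Complex.neg_im,
      Complex.I_re, Complex.I_im]
    ring
  have hzp : ∀ j, (z j).im + (ze j).im - (p j).re = 0 := by
    intro j
    have h1 : (ze j).im = -2 * (z j).im := by
      rw [hM1 j]
      simp only [Complex.sub_im, Complex.conj_im]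
      ring
    have h2 : (p j).re = (1/2) * (ze j).im := by
      have e : 2 * p j = -Complex.I * ze j := by rw [hM2 j]; ring
      have h := congrArg Complex.re e
      simp only [Complex.mul_re, Complex.neg_re, Complex.neg_im, Complex.I_re, Complex.I_im,
        Complex.re_ofNat, Complex.im_ofNat] at h
      linarith
    linarith
  have hyy : ∀ j l, (yp j l).re = (y j l).im := by
    intro j l
    rw [hM3 j l]
    simp [Complex.mul_re, Complex.neg_re, Complex.I_re, Complex.neg_im, Complex.I_im]
  have hx0im : x0.im = (1/2) * (ip v (fun x => dfun a0 x * v x)).im := by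
    have h := congrArg Complex.im hM7
    simp only [Complex.add_im, Complex.conj_im] at h
    linarith
  have hx0b : |(ip v (fun x => dfun a0 x * v x)).im| ≤ C0 * l2sq v := by
    have e : ip v (fun x => dfun a0 x * v x) = ip (fun x => -dfun a0 x * v x) v := by
      rw [ip_swap_mul (g := dfun a0) (u := v) (v0 := v)]
      exact ip_congr fun x => by rw [conj_dfun]
    rw [e]
    have h1 : |(ip (fun x => -dfun a0 x * v x) v).im|
        ≤ ‖ip (fun x => -dfun a0 x * v x) v‖ := by
      exact Complex.abs_im_le_norm _
    exact h1.trans (hC0b v hv1 hv.2)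
  have hmb : ∀ j, |(ip (fun x =>
      (Xop (a j) (htil j) x + dfun (a j) x * htil j x) * v x) v).re| ≤ Cm j * l2sq v := by
    intro j
    have h1 : |(ip (fun x => (Xop (a j) (htil j) x + dfun (a j) x * htil j x) * v x) v).re|
        ≤ ‖ip (fun x => (Xop (a j) (htil j) x + dfun (a j) x * htil j x) * v x) v‖ := by
      exact Complex.abs_re_le_norm _
    exact h1.trans (hCmb j v hv1 hv.2)
  -- the grand identity, real parts
  have imLL : (ip (P1 a0 a j1 v) v).im
      = (∑ j, ((z j).im + (∑ l, (y j l).im) + (ze j).im + (t j).im)) + x0.im := by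
    rw [LL, Complex.add_im, Complex.im_sum]
    congr 1
    refine Finset.sum_congr rfl fun j _ => ?_
    simp [Complex.add_im, Complex.im_sum]
  have reG : ∀ j, (ip (fun x =>
      (∑ k, Complex.I * c j j1 k x * Xstar (a k) (Xop (a j) v) x) +
        Complex.I / 2 * dfun (a j1) x * Xstar (a j) (Xop (a j) v) x +
        Complex.I / 2 *
          (cprime a c j1 j x - Xop (a j1) (dfun (a j)) x +
            2 * Xop (a j) (dfun (a j1)) x +
            dfun (a j1) x * dfun (a j) x) * Xop (a j) v x) v).re
      = (∑ k, ((yp j k).re + (up j k).re)) + (p j).re + (q j).re + (rr j).re := by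
    intro j
    rw [hR j]
    simp [Complex.add_re, Complex.re_sum]
  have perj : ∀ j, (z j).im + (∑ l, (y j l).im) + (ze j).im + (t j).im
      = ((∑ k, ((yp j k).re + (up j k).re)) + (p j).re + (q j).re + (rr j).re)
        + (ip (fun x => Hf j x * Xop (a j) v x) v).re := by
    intro j
    have h3 := reHf j
    have h1 := hzp j
    have hsum : ∑ l, (y j l).im = ∑ l, (yp j l).re :=
      Finset.sum_congr rfl fun l _ => (hyy j l).symm
    have hsum2 : ∑ k, ((yp j k).re + (up j k).re)
        = (∑ k, (yp j k).re) + ∑ k, (up j k).re := Finset.sum_add_distrib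
    linarith
  have assemble : (ip (P1 a0 a j1 v) v).im
      = (∑ j, (ip (fun x =>
          (∑ k, Complex.I * c j j1 k x * Xstar (a k) (Xop (a j) v) x) +
            Complex.I / 2 * dfun (a j1) x * Xstar (a j) (Xop (a j) v) x +
            Complex.I / 2 *
              (cprime a c j1 j x - Xop (a j1) (dfun (a j)) x +
                2 * Xop (a j) (dfun (a j1)) x +
                dfun (a j1) x * dfun (a j) x) * Xop (a j) v x) v).re)
        + (∑ j, (ip (fun x => Hf j x * Xop (a j) v x) v).re) + x0.im := by
    rw [imLL, Finset.sum_congr rfl fun j _ => perj j, Finset.sum_add_distrib]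
    rw [Finset.sum_congr rfl fun j _ => (reG j).symm]
  have hXisum : ∑ j, (ip (fun x => Hf j x * Xop (a j) v x) v).re
      = ∑ j, (-(1/2) * (ip (fun x =>
          (Xop (a j) (htil j) x + dfun (a j) x * htil j x) * v x) v).re) := by
    have h := congrArg Complex.re hC2
    rw [Complex.re_sum, Complex.re_sum] at h
    rw [h]
    exact Finset.sum_congr rfl fun j _ => hC3 j
  -- the final estimate
  have hL2 : 0 ≤ l2sq v := l2sq_nonneg v
  have hsumTb : ∑ j, (-(1/2) * (ip (fun x =>
      (Xop (a j) (htil j) x + dfun (a j) x * htil j x) * v x) v).re)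
      ≥ -(1/2) * ((∑ j, Cm j) * l2sq v) := by
    have h1 : ∑ j, (-(1/2) * (Cm j * l2sq v)) ≤ ∑ j, (-(1/2) * (ip (fun x =>
        (Xop (a j) (htil j) x + dfun (a j) x * htil j x) * v x) v).re) := by
      refine Finset.sum_le_sum fun j _ => ?_
      have h2 := le_of_abs_le (hmb j)
      linarith
    have h2 : ∑ j, (-(1/2) * (Cm j * l2sq v)) = -(1/2) * ((∑ j, Cm j) * l2sq v) := by
      rw [← Finset.mul_sum, ← Finset.sum_mul]
    linarith
  have hx0ge : x0.im ≥ -(1/2) * (C0 * l2sq v) := by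
    have h1 := neg_abs_le (ip v (fun x => dfun a0 x * v x)).im
    have h2 := hx0b
    rw [hx0im]
    linarith
  have expand : (1 + (1/2) * (C0 + ∑ j, Cm j)) * l2sq v
      = l2sq v + (1/2) * (C0 * l2sq v) + (1/2) * ((∑ j, Cm j) * l2sq v) := by ring
  rw [assemble]
  linarith [hsumTb, hx0ge, hXisum]

end Carleman
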